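/- For the Volterra operator T on L²[0,1], the eigenvalues of T*T are λₙ = (2/((2n+1)π))² with corresponding normalized eigenvectors uₙ(x) = √2 cos[(n+½)πx], and the eigenvectors of TT* for the same eigenvalues are vₙ(x) = √2 sin[(n+½)πx], and these satisfy ⟨uᵢ, vⱼ⟩ = (−1)^{i+j} ⟨uⱼ, vᵢ⟩ for all i, j ≥ 0. -/

import Mathlib

open scoped ComplexConjugate Real
open MeasureTheory

namespace VolterraAux

local notation "M" => (volume.restrict (Set.Icc (0:ℝ) 1))

noncomputable def k (m : ℕ) : ℝ := ((m : ℝ) + 1 / 2) * π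

lemma k_pos (m : ℕ) : 0 < k m := by
  have h1 := Real.pi_pos
  have h2 : (0:ℝ) ≤ (m:ℝ) := Nat.cast_nonneg m
  unfold k; positivity

lemma k_ne (m : ℕ) : k m ≠ 0 := (k_pos m).ne'

lemma k_mul (m : ℕ) (x : ℝ) : ((m : ℝ) + 1 / 2) * π * x = k m * x := rfl

lemma cos_k (m : ℕ) : Real.cos (k m) = 0 := by
  have h : k m = (m:ℝ) * π + π / 2 := by unfold k; ring
  rw [h, Real.cos_add, Real.cos_pi_div_two, Real.sin_pi_div_two, Real.sin_nat_mul_pi]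
  ring

lemma sin_two_k (m : ℕ) : Real.sin (2 * k m) = 0 := by
  have h : Real.sin (2 * k m) = 2 * Real.sin (k m) * Real.cos (k m) := Real.sin_two_mul _
  rw [h, cos_k]; ring

lemma integral_sin_mul (a : ℝ) :
    ∫ x in (0:ℝ)..1, Real.sin (a * x) = (1 - Real.cos a) / a := by
  rcases eq_or_ne a 0 with rfl | ha
  · simp
  · rw [intervalIntegral.integral_comp_mul_left _ ha, integral_sin]
    simp only [smul_eq_mul]
    field_simp
    simp

lemma integral_cos_mul (a : ℝ) (ha : a ≠ 0) (x : ℝ) :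
    ∫ y in (0:ℝ)..x, Real.cos (a * y) = Real.sin (a * x) / a := by
  rw [intervalIntegral.integral_comp_mul_left _ ha, integral_cos]
  simp [smul_eq_mul, div_eq_inv_mul]

lemma integral_sin_to_one (a : ℝ) (ha : a ≠ 0) (y : ℝ) :
    ∫ x in y..(1:ℝ), Real.sin (a * x) = (Real.cos (a * y) - Real.cos a) / a := by
  rw [intervalIntegral.integral_comp_mul_left _ ha, integral_sin]
  simp only [smul_eq_mul]
  field_simp

lemma integral_cos_sq_mul (m : ℕ) :
    ∫ x in (0:ℝ)..1, 2 * Real.cos (k m * x) ^ 2 = 1 := by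
  have h : ∀ x : ℝ, 2 * Real.cos (k m * x) ^ 2 = 1 + Real.cos (2 * (k m * x)) := by
    intro x; rw [Real.cos_sq]; ring
  simp_rw [h]
  rw [intervalIntegral.integral_add intervalIntegrable_const]
  · have h2 : ∀ x : ℝ, Real.cos (2 * (k m * x)) = Real.cos ((2 * k m) * x) := by
      intro x; ring_nf
    simp_rw [h2]
    rw [integral_cos_mul _ (by have := k_ne m; positivity) 1]
    simp [mul_one, sin_two_k]
  · apply Continuous.intervalIntegrable; continuity

lemma integral_sin_sq_mul (m : ℕ) :
    ∫ x in (0:ℝ)..1, 2 * Real.sin (k m * x) ^ 2 = 1 := by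
  have h : ∀ x : ℝ, 2 * Real.sin (k m * x) ^ 2 = 1 - Real.cos (2 * (k m * x)) := by
    intro x
    have h1 := Real.cos_sq (k m * x)
    have hs := Real.sin_sq_add_cos_sq (k m * x)
    nlinarith [h1, hs]
  simp_rw [h]
  rw [intervalIntegral.integral_sub intervalIntegrable_const]
  · have h2 : ∀ x : ℝ, Real.cos (2 * (k m * x)) = Real.cos ((2 * k m) * x) := by
      intro x; ring_nf
    simp_rw [h2]
    rw [integral_cos_mul _ (by have := k_ne m; positivity) 1]
    simp [mul_one, sin_two_k]
  · apply Continuous.intervalIntegrable; continuity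

lemma integral_two_sin_cos (a b : ℝ) :
    ∫ x in (0:ℝ)..1, 2 * Real.sin (a * x) * Real.cos (b * x)
      = (1 - Real.cos (a + b)) / (a + b) + (1 - Real.cos (a - b)) / (a - b) := by
  have h : ∀ x : ℝ, 2 * Real.sin (a * x) * Real.cos (b * x)
      = Real.sin ((a + b) * x) + Real.sin ((a - b) * x) := by
    intro x
    have h1 : (a + b) * x = a * x + b * x := by ring
    have h2 : (a - b) * x = a * x - b * x := by ring
    rw [h1, h2, Real.sin_add, Real.sin_sub]; ring
  simp_rw [h]
  rw [intervalIntegral.integral_add (by apply Continuous.intervalIntegrable; continuity)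
    (by apply Continuous.intervalIntegrable; continuity), integral_sin_mul, integral_sin_mul]

lemma sign_rel (i j : ℕ) :
    ∫ x in (0:ℝ)..1, 2 * Real.sin (k j * x) * Real.cos (k i * x)
      = (-1:ℝ)^(i+j) * ∫ x in (0:ℝ)..1, 2 * Real.sin (k i * x) * Real.cos (k j * x) := by
  rw [integral_two_sin_cos, integral_two_sin_cos]
  have hsum : k j + k i = ((i:ℝ) + j + 1) * π := by unfold k; ring
  have hsum' : k i + k j = ((i:ℝ) + j + 1) * π := by unfold k; ring
  have hdiff : k j - k i = ((j:ℝ) - i) * π := by unfold k; ring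
  have hdiff' : k i - k j = -(((j:ℝ) - i) * π) := by unfold k; ring
  rw [hsum, hsum', hdiff, hdiff', Real.cos_neg]
  rcases Nat.even_or_odd (i + j) with he | ho
  · have hev : Even ((j:ℤ) - i) := by
      rw [Int.even_sub]
      have h3 := (Nat.even_add.mp he)
      simp [Int.even_coe_nat, h3.symm]
    obtain ⟨t, ht⟩ := hev
    have h1 : Real.cos (((j:ℝ) - i) * π) = 1 := by
      have h4 : ((j:ℝ) - i) * π = (t:ℝ) * (2 * π) := by
        have h5 : ((j:ℝ) - (i:ℝ)) = ((t:ℝ) + (t:ℝ)) := by exact_mod_cast congrArg Int.cast ht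
        rw [h5]; ring
      rw [h4, Real.cos_int_mul_two_pi]
    rw [h1, he.neg_one_pow]
    ring
  · have hpow : (-1:ℝ)^(i+j) = -1 := ho.neg_one_pow
    obtain ⟨t, ht⟩ := ho
    have h1 : Real.cos (((i:ℝ) + j + 1) * π) = 1 := by
      have h4 : ((i:ℝ) + j + 1) * π = ((t:ℝ) + 1) * (2 * π) := by
        have h5 : (i:ℝ) + j = 2 * t + 1 := by exact_mod_cast congrArg Nat.cast ht
        rw [show (i:ℝ) + j + 1 = ((i:ℝ) + j) + 1 by ring, h5]; ring
      rw [h4]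
      exact_mod_cast Real.cos_int_mul_two_pi (t + 1)
    rw [h1, hpow, div_neg]
    ring

instance : IsFiniteMeasure M := by
  constructor
  rw [Measure.restrict_apply_univ, Real.volume_Icc]
  exact ENNReal.ofReal_lt_top

lemma ae_mem_M : ∀ᵐ x ∂M, x ∈ Set.Icc (0:ℝ) 1 := ae_restrict_mem measurableSet_Icc

lemma ae_pos_M : ∀ᵐ x ∂M, 0 < x := by
  rw [ae_iff]
  have h1 : {x : ℝ | ¬ 0 < x} = Set.Iic 0 := by ext x; simp
  rw [Measure.restrict_apply' measurableSet_Icc, h1]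
  have h2 : Set.Iic (0:ℝ) ∩ Set.Icc 0 1 ⊆ {0} := by
    intro x ⟨ha, hb, _⟩; simp [le_antisymm ha hb]
  exact le_antisymm (le_trans (measure_mono h2) (by simp)) (zero_le)

lemma integral_M_eq {E : Type*} [NormedAddCommGroup E] [NormedSpace ℝ E] (h : ℝ → E) :
    ∫ a, h a ∂M = ∫ x in (0:ℝ)..1, h x := by
  rw [intervalIntegral.integral_of_le zero_le_one, ← integral_Icc_eq_integral_Ioc]

lemma fubini_swap (f g : ℝ → ℂ) (hf : Integrable f M) (hg : Continuous g) :
    ∫ x, g x * (∫ y in Set.Ioc 0 x, f y ∂M) ∂M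
      = ∫ y, (∫ x in Set.Ici y, g x ∂M) * f y ∂M := by
  set s : Set (ℝ × ℝ) := {p : ℝ × ℝ | 0 < p.2 ∧ p.2 ≤ p.1} with hs_def
  have hs : MeasurableSet s :=
    (measurableSet_lt measurable_const measurable_snd).inter
      (measurableSet_le measurable_snd measurable_fst)
  have hg_int : Integrable g M := hg.integrableOn_Icc
  have hF : Integrable (fun p : ℝ × ℝ => s.indicator (fun q : ℝ × ℝ => g q.1 * f q.2) p)
      (Measure.prod M M) := (hg_int.mul_prod hf).indicator hs
  have swap := MeasureTheory.integral_integral_swap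
      (f := fun x y => s.indicator (fun q : ℝ × ℝ => g q.1 * f q.2) (x, y))
      (μ := M) (ν := M) (by exact hF)
  calc ∫ x, g x * (∫ y in Set.Ioc 0 x, f y ∂M) ∂M
      = ∫ x, ∫ y, s.indicator (fun q : ℝ × ℝ => g q.1 * f q.2) (x, y) ∂M ∂M := by
        refine integral_congr_ae (Filter.Eventually.of_forall fun x => ?_)
        have h1 : ∀ y : ℝ, s.indicator (fun q : ℝ × ℝ => g q.1 * f q.2) (x, y)
            = (Set.Ioc 0 x).indicator (fun y => g x * f y) y := by
          intro y
          by_cases hy : y ∈ Set.Ioc 0 x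
          · rw [Set.indicator_of_mem hy, Set.indicator_of_mem (by exact hy)]
          · rw [Set.indicator_of_notMem hy, Set.indicator_of_notMem (by exact hy)]
        simp_rw [h1]
        rw [integral_indicator measurableSet_Ioc, ← integral_const_mul]
    _ = ∫ y, ∫ x, s.indicator (fun q : ℝ × ℝ => g q.1 * f q.2) (x, y) ∂M ∂M := swap
    _ = ∫ y, (∫ x in Set.Ici y, g x ∂M) * f y ∂M := by
        refine integral_congr_ae (ae_pos_M.mono fun y hy => ?_)
        have h1 : ∀ x : ℝ, s.indicator (fun q : ℝ × ℝ => g q.1 * f q.2) (x, y)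
            = (Set.Ici y).indicator (fun x => g x * f y) x := by
          intro x
          by_cases hx : y ≤ x
          · rw [Set.indicator_of_mem (show (x, y) ∈ s from ⟨hy, hx⟩),
              Set.indicator_of_mem (Set.mem_Ici.mpr hx)]
          · rw [Set.indicator_of_notMem (fun h => hx h.2),
              Set.indicator_of_notMem (by simpa using hx)]
        simp_rw [h1]
        rw [integral_indicator measurableSet_Ici, ← integral_mul_const]

end VolterraAux

open VolterraAux

/-- Eigenvalues/eigenvectors of T*T and TT* for the Volterra operator T, and the
sign relation ⟨uᵢ, vⱼ⟩ = (−1)^(i+j) ⟨uⱼ, vᵢ⟩ (paper convention: ⟨f,g⟩ = ∫ f conj g). -/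
theorem volterra_modulus_eigendata
    (μ : Measure ℝ) (hμ : μ = volume.restrict (Set.Icc (0 : ℝ) 1))
    (T : Lp ℂ 2 μ →L[ℂ] Lp ℂ 2 μ)
    (hT : ∀ f : Lp ℂ 2 μ, (T f : ℝ → ℂ) =ᵐ[μ] fun x => ∫ y in Set.Ioc (0 : ℝ) x, f y ∂μ)
    (u v : ℕ → Lp ℂ 2 μ)
    (hu : ∀ m : ℕ, (u m : ℝ → ℂ) =ᵐ[μ]
      fun x => ((Real.sqrt 2 * Real.cos (((m : ℝ) + 1 / 2) * π * x) : ℝ) : ℂ))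
    (hv : ∀ m : ℕ, (v m : ℝ → ℂ) =ᵐ[μ]
      fun x => ((Real.sqrt 2 * Real.sin (((m : ℝ) + 1 / 2) * π * x) : ℝ) : ℂ)) :
    (∀ m : ℕ, ‖u m‖ = 1) ∧ (∀ m : ℕ, ‖v m‖ = 1) ∧
    (∀ m : ℕ, ContinuousLinearMap.adjoint T (T (u m)) =
      (((2 / ((2 * (m : ℝ) + 1) * π)) ^ 2 : ℝ) : ℂ) • u m) ∧
    (∀ m : ℕ, T (ContinuousLinearMap.adjoint T (v m)) =
      (((2 / ((2 * (m : ℝ) + 1) * π)) ^ 2 : ℝ) : ℂ) • v m) ∧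
    (∀ i j : ℕ, inner (𝕜 := ℂ) (v j) (u i) = (-1 : ℂ) ^ (i + j) * inner (𝕜 := ℂ) (v i) (u j)) := by
  subst hμ
  simp only [k_mul] at hu hv
  have hsq : Real.sqrt 2 * Real.sqrt 2 = 2 := Real.mul_self_sqrt (by norm_num)
  -- inner products as interval integrals
  have hIP : ∀ a b : ℕ, inner (𝕜 := ℂ) (v a) (u b)
      = ((∫ x in (0:ℝ)..1, 2 * Real.sin (k a * x) * Real.cos (k b * x) : ℝ) : ℂ) := by
    intro a b
    rw [MeasureTheory.L2.inner_def]
    simp_rw [RCLike.inner_apply]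
    rw [show ∫ x, (u b : ℝ → ℂ) x * conj ((v a : ℝ → ℂ) x) ∂(volume.restrict (Set.Icc (0:ℝ) 1))
        = ∫ x, ((2 * Real.sin (k a * x) * Real.cos (k b * x) : ℝ) : ℂ)
            ∂(volume.restrict (Set.Icc (0:ℝ) 1)) from
      integral_congr_ae (by
        filter_upwards [hv a, hu b] with x h1 h2
        rw [h1, h2, Complex.conj_ofReal, ← Complex.ofReal_mul]
        congr 1
        linear_combination Real.sin (k a * x) * Real.cos (k b * x) * hsq)]
    rw [integral_M_eq, intervalIntegral.integral_ofReal]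
  -- norm of u
  have hnu : ∀ m : ℕ, ‖u m‖ = 1 := by
    intro m
    have hin : inner (𝕜 := ℂ) (u m) (u m) = 1 := by
      rw [MeasureTheory.L2.inner_def]
      simp_rw [RCLike.inner_apply]
      rw [show ∫ x, (u m : ℝ → ℂ) x * conj ((u m : ℝ → ℂ) x) ∂(volume.restrict (Set.Icc (0:ℝ) 1))
          = ∫ x, ((2 * Real.cos (k m * x) ^ 2 : ℝ) : ℂ) ∂(volume.restrict (Set.Icc (0:ℝ) 1)) from
        integral_congr_ae (by
          filter_upwards [hu m] with x h1
          rw [h1, Complex.conj_ofReal, ← Complex.ofReal_mul]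
          congr 1
          linear_combination Real.cos (k m * x) ^ 2 * hsq)]
      rw [integral_M_eq, intervalIntegral.integral_ofReal, integral_cos_sq_mul]
      norm_num
    have h2 := inner_self_eq_norm_sq_to_K (𝕜 := ℂ) (u m)
    rw [hin] at h2
    have h3 : (1:ℝ) = ‖u m‖ ^ 2 := by
      apply Complex.ofReal_inj.mp
      push_cast
      exact h2
    have h4 := norm_nonneg (u m)
    nlinarith [h3, h4]
  have hnv : ∀ m : ℕ, ‖v m‖ = 1 := by
    intro m
    have hin : inner (𝕜 := ℂ) (v m) (v m) = 1 := by
      rw [MeasureTheory.L2.inner_def]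
      simp_rw [RCLike.inner_apply]
      rw [show ∫ x, (v m : ℝ → ℂ) x * conj ((v m : ℝ → ℂ) x) ∂(volume.restrict (Set.Icc (0:ℝ) 1))
          = ∫ x, ((2 * Real.sin (k m * x) ^ 2 : ℝ) : ℂ) ∂(volume.restrict (Set.Icc (0:ℝ) 1)) from
        integral_congr_ae (by
          filter_upwards [hv m] with x h1
          rw [h1, Complex.conj_ofReal, ← Complex.ofReal_mul]
          congr 1
          linear_combination Real.sin (k m * x) ^ 2 * hsq)]
      rw [integral_M_eq, intervalIntegral.integral_ofReal, integral_sin_sq_mul]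
      norm_num
    have h2 := inner_self_eq_norm_sq_to_K (𝕜 := ℂ) (v m)
    rw [hin] at h2
    have h3 : (1:ℝ) = ‖v m‖ ^ 2 := by
      apply Complex.ofReal_inj.mp
      push_cast
      exact h2
    have h4 := norm_nonneg (v m)
    nlinarith [h3, h4]
  -- T u = k⁻¹ • v
  have hTu : ∀ m : ℕ, T (u m) = (((k m)⁻¹ : ℝ) : ℂ) • v m := by
    intro m
    refine MeasureTheory.Lp.ext ?_
    have e1 : ∀ x : ℝ, ∫ y in Set.Ioc (0:ℝ) x, (u m : ℝ → ℂ) y ∂(volume.restrict (Set.Icc (0:ℝ) 1))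
        = ∫ y in Set.Ioc (0:ℝ) x, ((Real.sqrt 2 * Real.cos (k m * y) : ℝ) : ℂ)
            ∂(volume.restrict (Set.Icc (0:ℝ) 1)) :=
      fun x => integral_congr_ae (ae_restrict_of_ae (hu m))
    filter_upwards [hT (u m), Lp.coeFn_smul ((((k m)⁻¹ : ℝ) : ℂ)) (v m), hv m, ae_mem_M]
      with x h1 h3 h2 h4
    rw [h1, e1 x, h3, Pi.smul_apply, h2, smul_eq_mul]
    rw [Measure.restrict_restrict measurableSet_Ioc,
      Set.inter_eq_self_of_subset_left
        (Set.Ioc_subset_Icc_self.trans (Set.Icc_subset_Icc le_rfl h4.2)),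
      ← intervalIntegral.integral_of_le h4.1, intervalIntegral.integral_ofReal,
      intervalIntegral.integral_const_mul, integral_cos_mul _ (k_ne m)]
    have hk' : ((k m : ℝ) : ℂ) ≠ 0 := by exact_mod_cast k_ne m
    push_cast
    field_simp
  -- adjoint T v = k⁻¹ • u
  have hTadj : ∀ m : ℕ, ContinuousLinearMap.adjoint T (v m) = (((k m)⁻¹ : ℝ) : ℂ) • u m := by
    intro m
    apply ext_inner_right ℂ
    intro f
    rw [ContinuousLinearMap.adjoint_inner_left, inner_smul_left]
    rw [MeasureTheory.L2.inner_def, MeasureTheory.L2.inner_def]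
    simp_rw [RCLike.inner_apply]
    have hf : Integrable (f : ℝ → ℂ) (volume.restrict (Set.Icc (0:ℝ) 1)) :=
      (Lp.memLp f).integrable one_le_two
    have hgc : Continuous fun x : ℝ => ((Real.sqrt 2 * Real.sin (k m * x) : ℝ) : ℂ) :=
      Complex.continuous_ofReal.comp
        (continuous_const.mul (Real.continuous_sin.comp (continuous_const.mul continuous_id)))
    calc ∫ x, (T f : ℝ → ℂ) x * conj ((v m : ℝ → ℂ) x) ∂(volume.restrict (Set.Icc (0:ℝ) 1))
        = ∫ x, ((Real.sqrt 2 * Real.sin (k m * x) : ℝ) : ℂ)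
            * (∫ y in Set.Ioc (0:ℝ) x, (f : ℝ → ℂ) y ∂(volume.restrict (Set.Icc (0:ℝ) 1)))
            ∂(volume.restrict (Set.Icc (0:ℝ) 1)) := by
          refine integral_congr_ae ?_
          filter_upwards [hv m, hT f] with x h1 h2
          rw [h1, h2, Complex.conj_ofReal]
          ring
      _ = ∫ y, (∫ x in Set.Ici y, ((Real.sqrt 2 * Real.sin (k m * x) : ℝ) : ℂ)
            ∂(volume.restrict (Set.Icc (0:ℝ) 1))) * (f : ℝ → ℂ) y
            ∂(volume.restrict (Set.Icc (0:ℝ) 1)) := fubini_swap _ _ hf hgc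
      _ = ∫ y, ((Real.sqrt 2 * Real.cos (k m * y) / k m : ℝ) : ℂ) * (f : ℝ → ℂ) y
            ∂(volume.restrict (Set.Icc (0:ℝ) 1)) := by
          refine integral_congr_ae ?_
          filter_upwards [ae_mem_M] with y hy
          congr 1
          rw [Measure.restrict_restrict measurableSet_Ici,
            show Set.Ici y ∩ Set.Icc (0:ℝ) 1 = Set.Icc y 1 by
              ext z; simp only [Set.mem_inter_iff, Set.mem_Ici, Set.mem_Icc]
              constructor
              · rintro ⟨h1, _, h3⟩; exact ⟨h1, h3⟩
              · rintro ⟨h1, h2⟩; exact ⟨h1, le_trans hy.1 h1, h2⟩,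
            integral_Icc_eq_integral_Ioc, ← intervalIntegral.integral_of_le hy.2,
            intervalIntegral.integral_ofReal, intervalIntegral.integral_const_mul,
            integral_sin_to_one _ (k_ne m), cos_k]
          push_cast
          ring
      _ = conj (((k m)⁻¹ : ℝ) : ℂ)
            * ∫ x, (f : ℝ → ℂ) x * conj ((u m : ℝ → ℂ) x)
              ∂(volume.restrict (Set.Icc (0:ℝ) 1)) := by
          rw [Complex.conj_ofReal, ← integral_const_mul]
          refine integral_congr_ae ?_
          filter_upwards [hu m] with x h1
          rw [h1, Complex.conj_ofReal]
          push_cast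
          ring
  have hscal : ∀ m : ℕ, (((2 / ((2 * (m : ℝ) + 1) * π)) ^ 2 : ℝ) : ℂ)
      = (((k m)⁻¹ : ℝ) : ℂ) * (((k m)⁻¹ : ℝ) : ℂ) := by
    intro m
    rw [← Complex.ofReal_mul]
    congr 1
    have h5 : (2 * (m:ℝ) + 1) * π = 2 * k m := by unfold k; ring
    rw [h5]
    have hk := k_ne m
    field_simp
  refine ⟨hnu, hnv, ?_, ?_, ?_⟩
  · intro m
    rw [hTu m, (ContinuousLinearMap.adjoint T).map_smul, hTadj m, smul_smul, hscal m]
  · intro m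
    rw [hTadj m, T.map_smul, hTu m, smul_smul, hscal m]
  · intro i j
    rw [hIP j i, hIP i j, sign_rel i j]
    push_cast
    ring
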